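/- Fix an integer I ≥ 2, a matrix D̂ ∈ ℝ^{I×I}, and i ∈ {1,…,I}. The insider's canonical objective J(·; D̂, i) is differentiable at every d ∈ ℝ^I, with gradient ∇J(d) = e_i − π̄(d; D̂) − D̂ · ( ∫_{ℝ^I} [ diag(p(d+x; D̂)) − p(d+x; D̂) p(d+x; D̂)ᵀ ] dγ_I(x) ) · d, where diag(v) denotes the diagonal matrix with diagonal v. In particular, any maximizer d of J(·; D̂, i) satisfies the first-order condition e_i − π̄(d; D̂) − D̂ · E[diag(p) − ppᵀ] · d = 0. -/

import Mathlib

open MeasureTheory ProbabilityTheory Matrix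

noncomputable section

/-- The standard Gaussian measure `γ_I` on `ℝ^I` (mean 0, identity covariance). -/
def stdGaussian (I : ℕ) : Measure (Fin I → ℝ) :=
  Measure.pi fun _ => gaussianReal 0 1

/-- The posterior map `p(·; D̂)`:
`p_j(ω; D̂) = exp(⟨d̂⁽ʲ⁾, ω⟩ − ½‖d̂⁽ʲ⁾‖²) / Σ_k exp(⟨d̂⁽ᵏ⁾, ω⟩ − ½‖d̂⁽ᵏ⁾‖²)`,
where `d̂⁽ʲ⁾ = D̂ e_j` is the `j`-th column of `D̂`. -/
def postMap (I : ℕ) (D : Matrix (Fin I) (Fin I) ℝ) (ω : Fin I → ℝ) : Fin I → ℝ :=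
  fun j => Real.exp ((∑ k, D k j * ω k) - (∑ k, (D k j) ^ 2) / 2) /
    ∑ l, Real.exp ((∑ k, D k l * ω k) - (∑ k, (D k l) ^ 2) / 2)

/-- `π̄(d; D̂) = ∫ p(d + x; D̂) dγ_I(x)`. -/
def postBar (I : ℕ) (D : Matrix (Fin I) (Fin I) ℝ) (d : Fin I → ℝ) : Fin I → ℝ :=
  fun j => ∫ x, postMap I D (d + x) j ∂(stdGaussian I)

/-- The insider's canonical objective `J(d; D̂, i) = ⟨e_i, d⟩ − ⟨π̄(d; D̂), d⟩`. -/
def Jobj (I : ℕ) (D : Matrix (Fin I) (Fin I) ℝ) (i : Fin I) (d : Fin I → ℝ) : ℝ :=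
  d i - ∑ j, postBar I D d j * d j

/-- The continuous linear functional `v ↦ ⟨g, v⟩ = Σ_j g_j v_j` on `ℝ^I`. -/
def dotCLM {I : ℕ} (g : Fin I → ℝ) : (Fin I → ℝ) →L[ℝ] ℝ :=
  ∑ j, g j • (ContinuousLinearMap.proj j : (Fin I → ℝ) →L[ℝ] ℝ)

/-- The matrix `∫ [diag(p(d+x; D̂)) − p(d+x; D̂) p(d+x; D̂)ᵀ] dγ_I(x)` (entrywise integral). -/
def covMat (I : ℕ) (D : Matrix (Fin I) (Fin I) ℝ) (d : Fin I → ℝ) :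
    Matrix (Fin I) (Fin I) ℝ :=
  Matrix.of fun j k =>
    ∫ x, (Matrix.diagonal (postMap I D (d + x)) -
      Matrix.vecMulVec (postMap I D (d + x)) (postMap I D (d + x))) j k ∂(stdGaussian I)

/-- The claimed gradient `∇J(d) = e_i − π̄(d; D̂) − D̂·(∫ [diag(p) − ppᵀ] dγ_I)·d`. -/
def gradJ (I : ℕ) (D : Matrix (Fin I) (Fin I) ℝ) (i : Fin I) (d : Fin I → ℝ) :
    Fin I → ℝ :=
  (Pi.single i 1 : Fin I → ℝ) - postBar I D d - D.mulVec ((covMat I D d).mulVec d)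

/-! ### Auxiliary material -/

namespace JGrad

variable {I : ℕ} (D : Matrix (Fin I) (Fin I) ℝ)

instance : IsProbabilityMeasure (stdGaussian I) := by
  unfold _root_.stdGaussian; infer_instance

/-- Numerator of the posterior map. -/
def En (j : Fin I) (ω : Fin I → ℝ) : ℝ :=
  Real.exp ((∑ k, D k j * ω k) - (∑ k, (D k j) ^ 2) / 2)

/-- Denominator of the posterior map. -/
def Sn (ω : Fin I → ℝ) : ℝ := ∑ l, En D l ω

lemma postMap_eq (j : Fin I) (ω : Fin I → ℝ) :
    postMap I D ω j = En D j ω / Sn D ω := rfl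

lemma En_pos (j : Fin I) (ω : Fin I → ℝ) : 0 < En D j ω := Real.exp_pos _

lemma Sn_pos (ω : Fin I → ℝ) (hI : 0 < I) : 0 < Sn D ω := by
  have : Nonempty (Fin I) := ⟨⟨0, hI⟩⟩
  exact Finset.sum_pos (fun l _ => En_pos D l ω) Finset.univ_nonempty

lemma Sn_ne (ω : Fin I → ℝ) (hI : 0 < I) : Sn D ω ≠ 0 := (Sn_pos D ω hI).ne'

lemma postMap_nonneg (j : Fin I) (ω : Fin I → ℝ) (hI : 0 < I) :
    0 ≤ postMap I D ω j := by
  rw [postMap_eq]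
  exact div_nonneg (En_pos D j ω).le (Sn_pos D ω hI).le

lemma postMap_le_one (j : Fin I) (ω : Fin I → ℝ) (hI : 0 < I) :
    postMap I D ω j ≤ 1 := by
  rw [postMap_eq, div_le_one (Sn_pos D ω hI)]
  exact Finset.single_le_sum (fun l _ => (En_pos D l ω).le) (Finset.mem_univ j)

lemma sum_postMap (ω : Fin I → ℝ) (hI : 0 < I) :
    ∑ l, postMap I D ω l = 1 := by
  simp only [postMap_eq]
  rw [← Finset.sum_div]
  exact div_self (Sn_ne D ω hI)

lemma dotCLM_apply (g v : Fin I → ℝ) : dotCLM g v = ∑ j, g j * v j := by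
  simp [dotCLM]

lemma norm_dotCLM_le (g : Fin I → ℝ) : ‖dotCLM g‖ ≤ ∑ j, |g j| := by
  refine ContinuousLinearMap.opNorm_le_bound _ (by positivity) fun v => ?_
  rw [dotCLM_apply]
  calc ‖∑ j, g j * v j‖ ≤ ∑ j, ‖g j * v j‖ := norm_sum_le _ _
    _ ≤ ∑ j, |g j| * ‖v‖ := by
        refine Finset.sum_le_sum fun j _ => ?_
        rw [norm_mul, Real.norm_eq_abs]
        exact mul_le_mul_of_nonneg_left (norm_le_pi_norm v j) (abs_nonneg _)
    _ = (∑ j, |g j|) * ‖v‖ := (Finset.sum_mul _ _ _).symm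

lemma continuous_En (j : Fin I) : Continuous (En D j) := by
  unfold En; fun_prop

lemma continuous_Sn : Continuous (Sn D) := by
  unfold Sn
  exact continuous_finset_sum _ fun l _ => continuous_En D l

lemma continuous_post (j : Fin I) (hI : 0 < I) :
    Continuous (fun ω => postMap I D ω j) := by
  have : (fun ω => postMap I D ω j) = fun ω => En D j ω / Sn D ω := rfl
  rw [this]
  exact (continuous_En D j).div (continuous_Sn D) (fun ω => Sn_ne D ω hI)

/-- The `m`-th component of the gradient of `ω ↦ p_j(ω)`. -/
def pDer (ω : Fin I → ℝ) (j m : Fin I) : ℝ :=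
  postMap I D ω j * (D m j - ∑ l, postMap I D ω l * D m l)

lemma continuous_pDer (j m : Fin I) (hI : 0 < I) :
    Continuous (fun ω => pDer D ω j m) := by
  unfold pDer
  exact (continuous_post D j hI).mul (continuous_const.sub
    (continuous_finset_sum _ fun l _ => (continuous_post D l hI).mul continuous_const))

lemma abs_pDer_le (ω : Fin I → ℝ) (j m : Fin I) (hI : 0 < I) :
    |pDer D ω j m| ≤ 2 * ∑ l, |D m l| := by
  unfold pDer
  rw [abs_mul]
  have h1 : |postMap I D ω j| ≤ 1 := by
    rw [abs_of_nonneg (postMap_nonneg D j ω hI)]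
    exact postMap_le_one D j ω hI
  have h2 : |D m j - ∑ l, postMap I D ω l * D m l| ≤ 2 * ∑ l, |D m l| := by
    refine (abs_sub _ _).trans ?_
    have ha : |D m j| ≤ ∑ l, |D m l| :=
      Finset.single_le_sum (fun l _ => abs_nonneg (D m l)) (Finset.mem_univ j)
    have hb : |∑ l, postMap I D ω l * D m l| ≤ ∑ l, |D m l| := by
      refine (Finset.abs_sum_le_sum_abs _ _).trans (Finset.sum_le_sum fun l _ => ?_)
      rw [abs_mul, abs_of_nonneg (postMap_nonneg D l ω hI)]
      calc postMap I D ω l * |D m l| ≤ 1 * |D m l| :=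
            mul_le_mul_of_nonneg_right (postMap_le_one D l ω hI) (abs_nonneg _)
        _ = |D m l| := one_mul _
    linarith
  calc |postMap I D ω j| * |D m j - ∑ l, postMap I D ω l * D m l|
      ≤ 1 * (2 * ∑ l, |D m l|) := by
        apply mul_le_mul h1 h2 (abs_nonneg _) zero_le_one
    _ = 2 * ∑ l, |D m l| := one_mul _

lemma hasFDerivAt_En (j : Fin I) (ω : Fin I → ℝ) :
    HasFDerivAt (En D j) (En D j ω • dotCLM (fun m => D m j)) ω := by
  have h1 : HasFDerivAt (fun ω : Fin I → ℝ => (∑ k, D k j * ω k) - (∑ k, (D k j) ^ 2) / 2)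
      (dotCLM (fun m => D m j)) ω := by
    have h0 := (dotCLM (fun m => D m j)).hasFDerivAt (x := ω)
    have h0' : HasFDerivAt (fun ω : Fin I → ℝ => ∑ k, D k j * ω k)
        (dotCLM (fun m => D m j)) ω := by
      have : (fun ω : Fin I → ℝ => ∑ k, D k j * ω k) = fun v => dotCLM (fun m => D m j) v := by
        funext v; rw [dotCLM_apply]
      rw [this]; exact h0
    simpa using h0'.sub_const ((∑ k, (D k j) ^ 2) / 2)
  exact h1.exp

lemma hasFDerivAt_Sn (ω : Fin I → ℝ) :
    HasFDerivAt (Sn D) (∑ l, En D l ω • dotCLM (fun m => D m l)) ω := by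
  unfold Sn
  exact HasFDerivAt.fun_sum fun l _ => hasFDerivAt_En D l ω

lemma hasFDerivAt_post (j : Fin I) (ω : Fin I → ℝ) (hI : 0 < I) :
    HasFDerivAt (fun ω => postMap I D ω j) (dotCLM (pDer D ω j)) ω := by
  have hSne := Sn_ne D ω hI
  have hinv : HasFDerivAt (fun ω => (Sn D ω)⁻¹)
      ((-ContinuousLinearMap.mulLeftRight ℝ ℝ (Sn D ω)⁻¹ (Sn D ω)⁻¹).comp
        (∑ l, En D l ω • dotCLM (fun m => D m l))) ω :=
    (hasFDerivAt_inv' hSne).comp ω (hasFDerivAt_Sn D ω)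
  have hmul := (hasFDerivAt_En D j ω).mul hinv
  have heq : (fun ω => postMap I D ω j) = fun ω => En D j ω * (Sn D ω)⁻¹ := by
    funext ω; rw [postMap_eq, div_eq_mul_inv]
  rw [heq]
  refine hmul.congr_fderiv ?_; symm
  ext v
  rw [dotCLM_apply]
  simp only [ContinuousLinearMap.add_apply, ContinuousLinearMap.smul_apply,
    ContinuousLinearMap.comp_apply, ContinuousLinearMap.neg_apply,
    ContinuousLinearMap.mulLeftRight_apply, ContinuousLinearMap.sum_apply, smul_eq_mul,
    dotCLM_apply]
  -- reduce to a scalar identity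
  have hsum1 : ∑ l, postMap I D ω l = 1 := sum_postMap D ω hI
  -- LHS: ∑ m, pDer D ω j m * v m
  have hL : ∑ m, pDer D ω j m * v m
      = ∑ m, ∑ l, postMap I D ω j * postMap I D ω l * (D m j - D m l) * v m := by
    refine Finset.sum_congr rfl fun m _ => ?_
    unfold pDer
    have : D m j - ∑ l, postMap I D ω l * D m l
        = ∑ l, postMap I D ω l * (D m j - D m l) := by
      rw [Finset.sum_congr rfl fun l _ => (mul_sub (postMap I D ω l) (D m j) (D m l)),
        Finset.sum_sub_distrib, ← Finset.sum_mul, hsum1, one_mul]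
    rw [this, Finset.mul_sum, Finset.sum_mul]
    exact Finset.sum_congr rfl fun l _ => by ring
  rw [hL, Finset.sum_comm]
  -- now compare with the RHS
  have hRL : ∀ l, ∑ m, postMap I D ω j * postMap I D ω l * (D m j - D m l) * v m
      = postMap I D ω j * postMap I D ω l * ((∑ m, D m j * v m) - ∑ m, D m l * v m) := by
    intro l
    rw [← Finset.sum_sub_distrib, Finset.mul_sum]
    refine Finset.sum_congr rfl fun m _ => by ring
  rw [Finset.sum_congr rfl fun l _ => hRL l]
  have hexp : ∀ l, postMap I D ω l = En D l ω * (Sn D ω)⁻¹ := fun l => by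
    rw [postMap_eq, div_eq_mul_inv]
  simp only [hexp]
  rw [Finset.sum_congr rfl (fun l (_ : l ∈ Finset.univ) =>
    show En D j ω * (Sn D ω)⁻¹ * (En D l ω * (Sn D ω)⁻¹) *
        ((∑ m, D m j * v m) - ∑ m, D m l * v m)
      = En D j ω * (Sn D ω)⁻¹ * (Sn D ω)⁻¹ *
          (En D l ω * (∑ m, D m j * v m)) -
        En D j ω * (Sn D ω)⁻¹ * (Sn D ω)⁻¹ * (En D l ω * (∑ m, D m l * v m)) from by ring),
    Finset.sum_sub_distrib, ← Finset.mul_sum, ← Finset.mul_sum, ← Finset.sum_mul,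
    show (∑ l, En D l ω) = Sn D ω from rfl]
  field_simp
  ring


/-- The integrand `⟨p(d+x), d⟩`. -/
def Fg (d x : Fin I → ℝ) : ℝ := ∑ j, postMap I D (d + x) j * d j

/-- The claimed gradient of `d ↦ ⟨p(d+x), d⟩`. -/
def Gv (d x : Fin I → ℝ) : Fin I → ℝ :=
  fun m => postMap I D (d + x) m + ∑ j, d j * pDer D (d + x) j m

lemma hasFDerivAt_post_shift (j : Fin I) (x d : Fin I → ℝ) (hI : 0 < I) :
    HasFDerivAt (fun d => postMap I D (d + x) j) (dotCLM (pDer D (d + x) j)) d := by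
  have h1 : HasFDerivAt (fun d : Fin I → ℝ => d + x)
      (ContinuousLinearMap.id ℝ (Fin I → ℝ)) d := (hasFDerivAt_id d).add_const x
  have h2 := (hasFDerivAt_post D j (d + x) hI).comp d h1
  exact h2

lemma hasFDerivAt_Fg (x d : Fin I → ℝ) (hI : 0 < I) :
    HasFDerivAt (fun d => Fg D d x) (dotCLM (Gv D d x)) d := by
  have h : HasFDerivAt (fun d => Fg D d x)
      (∑ j, (postMap I D (d + x) j • (ContinuousLinearMap.proj j : (Fin I → ℝ) →L[ℝ] ℝ)
        + d j • dotCLM (pDer D (d + x) j))) d := by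
    refine HasFDerivAt.fun_sum fun j _ => ?_
    have hc : HasFDerivAt (fun y : Fin I → ℝ => y j)
        (ContinuousLinearMap.proj j : (Fin I → ℝ) →L[ℝ] ℝ) d :=
      (ContinuousLinearMap.proj j : (Fin I → ℝ) →L[ℝ] ℝ).hasFDerivAt
    exact (hasFDerivAt_post_shift D j x d hI).mul hc
  refine h.congr_fderiv ?_; symm
  ext v
  rw [dotCLM_apply]
  simp only [ContinuousLinearMap.sum_apply, ContinuousLinearMap.add_apply,
    ContinuousLinearMap.smul_apply, ContinuousLinearMap.proj_apply, smul_eq_mul, dotCLM_apply, Gv]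
  have hm : ∀ m, (postMap I D (d + x) m + ∑ j, d j * pDer D (d + x) j m) * v m
      = postMap I D (d + x) m * v m + ∑ j, d j * pDer D (d + x) j m * v m := fun m => by
    rw [add_mul, Finset.sum_mul]
  rw [Finset.sum_congr rfl fun m _ => hm m, Finset.sum_add_distrib, Finset.sum_add_distrib,
    Finset.sum_comm]
  congr 1
  refine Finset.sum_congr rfl fun j _ => ?_
  rw [Finset.mul_sum]
  exact Finset.sum_congr rfl fun m _ => by ring

lemma continuous_shift (d : Fin I → ℝ) : Continuous (fun x : Fin I → ℝ => d + x) :=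
  continuous_const.add continuous_id

lemma integrable_of_bdd {f : (Fin I → ℝ) → ℝ} (hf : Continuous f) {C : ℝ}
    (hC : ∀ x, |f x| ≤ C) : Integrable f (stdGaussian I) :=
  (integrable_const C).mono' hf.aestronglyMeasurable
    (Filter.Eventually.of_forall fun x => by simpa [Real.norm_eq_abs] using hC x)

lemma continuous_Gv (d : Fin I → ℝ) (m : Fin I) (hI : 0 < I) :
    Continuous (fun x => Gv D d x m) := by
  unfold Gv
  exact ((continuous_post D m hI).comp (continuous_shift d)).add
    (continuous_finset_sum _ fun j _ =>
      continuous_const.mul ((continuous_pDer D j m hI).comp (continuous_shift d)))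

lemma abs_Gv_le (d x : Fin I → ℝ) (m : Fin I) (hI : 0 < I) {R : ℝ}
    (hd : ∑ j, |d j| ≤ R) :
    |Gv D d x m| ≤ 1 + R * (2 * ∑ l, |D m l|) := by
  unfold Gv
  have h1 : |postMap I D (d + x) m| ≤ 1 := by
    rw [abs_of_nonneg (postMap_nonneg D m (d + x) hI)]
    exact postMap_le_one D m (d + x) hI
  have h2 : |∑ j, d j * pDer D (d + x) j m| ≤ R * (2 * ∑ l, |D m l|) := by
    refine (Finset.abs_sum_le_sum_abs _ _).trans ?_
    have : ∀ j, |d j * pDer D (d + x) j m| ≤ |d j| * (2 * ∑ l, |D m l|) := fun j => by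
      rw [abs_mul]
      exact mul_le_mul_of_nonneg_left (abs_pDer_le D (d + x) j m hI) (abs_nonneg _)
    refine (Finset.sum_le_sum fun j _ => this j).trans ?_
    rw [← Finset.sum_mul]
    have h0 : (0:ℝ) ≤ 2 * ∑ l, |D m l| := by positivity
    exact mul_le_mul_of_nonneg_right hd h0
  calc |postMap I D (d + x) m + ∑ j, d j * pDer D (d + x) j m|
      ≤ |postMap I D (d + x) m| + |∑ j, d j * pDer D (d + x) j m| := abs_add_le _ _
    _ ≤ 1 + R * (2 * ∑ l, |D m l|) := add_le_add h1 h2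

lemma pDer_eq_sum (ω : Fin I → ℝ) (j m : Fin I) :
    pDer D ω j m = ∑ l, D m l *
      ((Matrix.diagonal (postMap I D ω) - Matrix.vecMulVec (postMap I D ω) (postMap I D ω)) l j) := by
  simp only [Matrix.sub_apply, Matrix.diagonal_apply, Matrix.vecMulVec_apply, mul_sub,
    mul_ite, mul_zero, Finset.sum_sub_distrib, Finset.sum_ite_eq', Finset.mem_univ, if_true]
  unfold pDer
  rw [mul_sub]
  congr 1
  · ring
  · rw [Finset.mul_sum]
    exact Finset.sum_congr rfl fun l _ => by ring

end JGrad


/-- The insider's canonical objective `J(·; D̂, i)` is differentiable at every `d`, with the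
stated gradient; in particular, any maximizer satisfies the first-order condition
`e_i − π̄(d; D̂) − D̂·E[diag(p) − ppᵀ]·d = 0`. -/
theorem J_differentiable_with_gradient (I : ℕ) (hI : 2 ≤ I)
    (D : Matrix (Fin I) (Fin I) ℝ) (i : Fin I) :
    (∀ d : Fin I → ℝ, HasFDerivAt (Jobj I D i) (dotCLM (gradJ I D i d)) d) ∧
      ∀ d : Fin I → ℝ, (∀ d' : Fin I → ℝ, Jobj I D i d' ≤ Jobj I D i d) →
        gradJ I D i d = 0 := by
  have hI0 : 0 < I := by omega
  -- continuity of the shifted posterior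
  have hpc : ∀ (d : Fin I → ℝ) (j : Fin I), Continuous fun x => postMap I D (d + x) j :=
    fun d j => (JGrad.continuous_post D j hI0).comp (JGrad.continuous_shift d)
  have hpb : ∀ (d x : Fin I → ℝ) (j : Fin I), |postMap I D (d + x) j| ≤ 1 := by
    intro d x j
    rw [abs_of_nonneg (JGrad.postMap_nonneg D j (d + x) hI0)]
    exact JGrad.postMap_le_one D j (d + x) hI0
  have hint_post : ∀ (d : Fin I → ℝ) (j : Fin I),
      Integrable (fun x => postMap I D (d + x) j) (stdGaussian I) :=
    fun d j => JGrad.integrable_of_bdd (hpc d j) (fun x => hpb d x j)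
  have hint_pj : ∀ (d : Fin I → ℝ) (j : Fin I),
      Integrable (fun x => postMap I D (d + x) j * d j) (stdGaussian I) := by
    intro d j
    refine JGrad.integrable_of_bdd ((hpc d j).mul continuous_const) (C := |d j|) fun x => ?_
    rw [abs_mul]
    calc |postMap I D (d + x) j| * |d j| ≤ 1 * |d j| :=
          mul_le_mul_of_nonneg_right (hpb d x j) (abs_nonneg _)
      _ = |d j| := one_mul _
  have hint_pDer : ∀ (d : Fin I → ℝ) (j m : Fin I),
      Integrable (fun x => JGrad.pDer D (d + x) j m) (stdGaussian I) := by
    intro d j m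
    exact JGrad.integrable_of_bdd
      ((JGrad.continuous_pDer D j m hI0).comp (JGrad.continuous_shift d))
      (fun x => JGrad.abs_pDer_le D (d + x) j m hI0)
  have hint_M : ∀ (d : Fin I → ℝ) (l j : Fin I),
      Integrable (fun x => (Matrix.diagonal (postMap I D (d + x)) -
        Matrix.vecMulVec (postMap I D (d + x)) (postMap I D (d + x))) l j) (stdGaussian I) := by
    intro d l j
    refine JGrad.integrable_of_bdd ?_ (C := 2) ?_
    · simp only [Matrix.sub_apply, Matrix.diagonal_apply, Matrix.vecMulVec_apply]
      by_cases h : l = j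
      · subst h
        simp only [if_true]
        exact (hpc d l).sub ((hpc d l).mul (hpc d l))
      · simp only [h, if_false]
        exact continuous_const.sub ((hpc d l).mul (hpc d j))
    · intro x
      simp only [Matrix.sub_apply, Matrix.diagonal_apply, Matrix.vecMulVec_apply]
      have h1 : |(if l = j then postMap I D (d + x) l else 0)| ≤ 1 := by
        by_cases h : l = j
        · simp only [h, if_true]; exact hpb d x j
        · simp [h]
      have h2 : |postMap I D (d + x) l * postMap I D (d + x) j| ≤ 1 := by
        rw [abs_mul]
        calc |postMap I D (d + x) l| * |postMap I D (d + x) j| ≤ 1 * 1 :=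
              mul_le_mul (hpb d x l) (hpb d x j) (abs_nonneg _) zero_le_one
          _ = 1 := one_mul _
      calc |(if l = j then postMap I D (d + x) l else 0) -
            postMap I D (d + x) l * postMap I D (d + x) j|
          ≤ |(if l = j then postMap I D (d + x) l else 0)| +
            |postMap I D (d + x) l * postMap I D (d + x) j| := abs_sub _ _
        _ ≤ 2 := by linarith
  have hint_Gv : ∀ (d : Fin I → ℝ) (m : Fin I),
      Integrable (fun x => JGrad.Gv D d x m) (stdGaussian I) := by
    intro d m
    exact JGrad.integrable_of_bdd (JGrad.continuous_Gv D d m hI0)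
      (fun x => JGrad.abs_Gv_le D d x m hI0 (le_refl (∑ j, |d j|)))
  -- rewriting Jobj through a single integral
  have hJ : Jobj I D i = fun d => d i - ∫ x, JGrad.Fg D d x ∂(stdGaussian I) := by
    funext d
    simp only [Jobj, postBar, JGrad.Fg]
    congr 1
    rw [integral_finset_sum _ fun j _ => hint_pj d j]
    exact Finset.sum_congr rfl fun j _ => (integral_mul_const _ _).symm
  have hgrad : ∀ d : Fin I → ℝ, HasFDerivAt (Jobj I D i) (dotCLM (gradJ I D i d)) d := by
    intro d₀
    have hGvCont : Continuous fun x => dotCLM (JGrad.Gv D d₀ x) := by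
      unfold dotCLM
      exact continuous_finset_sum _ fun m _ =>
        (JGrad.continuous_Gv D d₀ m hI0).smul continuous_const
    have hmain : HasFDerivAt (fun d => ∫ x, JGrad.Fg D d x ∂(stdGaussian I))
        (∫ x, dotCLM (JGrad.Gv D d₀ x) ∂(stdGaussian I)) d₀ := by
      refine hasFDerivAt_integral_of_dominated_of_fderiv_le
        (F' := fun d x => dotCLM (JGrad.Gv D d x))
        (bound := fun _ => ∑ m, (1 + (∑ _j : Fin I, (‖d₀‖ + 1)) * (2 * ∑ l, |D m l|)))
        (s := Metric.ball d₀ 1) (Metric.ball_mem_nhds d₀ one_pos) ?_ ?_ ?_ ?_ ?_ ?_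
      · refine Filter.Eventually.of_forall fun d => Continuous.aestronglyMeasurable ?_
        exact continuous_finset_sum _ fun j _ => (hpc d j).mul continuous_const
      · unfold JGrad.Fg
        exact integrable_finset_sum _ fun j _ => hint_pj d₀ j
      · exact hGvCont.aestronglyMeasurable
      · refine Filter.Eventually.of_forall fun x d hd => ?_
        refine (JGrad.norm_dotCLM_le _).trans ?_
        refine Finset.sum_le_sum fun m _ => JGrad.abs_Gv_le D d x m hI0 ?_
        refine Finset.sum_le_sum fun j _ => ?_
        have h1 : |d j| ≤ ‖d‖ := by
          simpa [Real.norm_eq_abs] using norm_le_pi_norm d j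
        have h2 : ‖d - d₀‖ < 1 := by
          rw [← dist_eq_norm]
          exact Metric.mem_ball.mp hd
        have h3 := norm_sub_norm_le d d₀
        linarith
      · exact integrable_const _
      · exact Filter.Eventually.of_forall fun x d _ => JGrad.hasFDerivAt_Fg D x d hI0
    have hGv_int : Integrable (fun x => dotCLM (JGrad.Gv D d₀ x)) (stdGaussian I) := by
      refine (integrable_const (∑ m, (1 + (∑ j, |d₀ j|) * (2 * ∑ l, |D m l|)))).mono'
        hGvCont.aestronglyMeasurable (Filter.Eventually.of_forall fun x => ?_)
      refine (JGrad.norm_dotCLM_le _).trans ?_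
      exact Finset.sum_le_sum fun m _ =>
        JGrad.abs_Gv_le D d₀ x m hI0 (le_refl (∑ j, |d₀ j|))
    -- identify the derivative
    have wkey : ∀ m, (∫ x, JGrad.Gv D d₀ x m ∂(stdGaussian I))
        = postBar I D d₀ m + D.mulVec ((covMat I D d₀).mulVec d₀) m := by
      intro m
      unfold JGrad.Gv
      rw [integral_add (hint_post d₀ m)
        (integrable_finset_sum _ fun j _ => (hint_pDer d₀ j m).const_mul (d₀ j))]
      congr 1
      rw [integral_finset_sum _ fun j _ => (hint_pDer d₀ j m).const_mul (d₀ j)]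
      have h2 : ∀ j, ∫ x, d₀ j * JGrad.pDer D (d₀ + x) j m ∂(stdGaussian I)
          = d₀ j * ∑ l, D m l * covMat I D d₀ l j := by
        intro j
        rw [integral_const_mul]
        congr 1
        rw [show (fun x => JGrad.pDer D (d₀ + x) j m)
            = fun x => ∑ l, D m l * ((Matrix.diagonal (postMap I D (d₀ + x)) -
              Matrix.vecMulVec (postMap I D (d₀ + x)) (postMap I D (d₀ + x))) l j) from
          funext fun x => JGrad.pDer_eq_sum D (d₀ + x) j m]
        rw [integral_finset_sum _ fun l _ => (hint_M d₀ l j).const_mul (D m l)]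
        exact Finset.sum_congr rfl fun l _ => by rw [integral_const_mul]; rfl
      rw [Finset.sum_congr rfl fun j _ => h2 j]
      calc ∑ j, d₀ j * ∑ l, D m l * covMat I D d₀ l j
          = ∑ j, ∑ l, d₀ j * (D m l * covMat I D d₀ l j) :=
            Finset.sum_congr rfl fun j _ => Finset.mul_sum _ _ _
        _ = ∑ l, ∑ j, d₀ j * (D m l * covMat I D d₀ l j) := Finset.sum_comm
        _ = ∑ l, D m l * ∑ j, covMat I D d₀ l j * d₀ j := by
            refine Finset.sum_congr rfl fun l _ => ?_
            rw [Finset.mul_sum]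
            exact Finset.sum_congr rfl fun j _ => by ring
        _ = D.mulVec ((covMat I D d₀).mulVec d₀) m := by
            simp [Matrix.mulVec, dotProduct]
    have hkey : (ContinuousLinearMap.proj i : (Fin I → ℝ) →L[ℝ] ℝ)
        - (∫ x, dotCLM (JGrad.Gv D d₀ x) ∂(stdGaussian I)) = dotCLM (gradJ I D i d₀) := by
      ext v
      rw [ContinuousLinearMap.sub_apply, ContinuousLinearMap.proj_apply,
        ContinuousLinearMap.integral_apply hGv_int, JGrad.dotCLM_apply]
      have h1 : ∫ x, (dotCLM (JGrad.Gv D d₀ x)) v ∂(stdGaussian I)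
          = ∑ m, (∫ x, JGrad.Gv D d₀ x m ∂(stdGaussian I)) * v m := by
        simp_rw [JGrad.dotCLM_apply]
        rw [integral_finset_sum _ fun m _ => (hint_Gv d₀ m).mul_const (v m)]
        exact Finset.sum_congr rfl fun m _ => integral_mul_const _ _
      rw [h1, Finset.sum_congr rfl fun m (_ : m ∈ Finset.univ) => by rw [wkey m]]
      have hsingle : ∑ m, (Pi.single i (1:ℝ) : Fin I → ℝ) m * v m = v i := by
        simp [Pi.single_apply]
      calc v i - ∑ m, (postBar I D d₀ m + D.mulVec ((covMat I D d₀).mulVec d₀) m) * v m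
          = ∑ m, ((Pi.single i (1:ℝ) : Fin I → ℝ) m * v m)
            - ∑ m, (postBar I D d₀ m + D.mulVec ((covMat I D d₀).mulVec d₀) m) * v m := by
            rw [hsingle]
        _ = ∑ m, gradJ I D i d₀ m * v m := by
            rw [← Finset.sum_sub_distrib]
            refine Finset.sum_congr rfl fun m _ => ?_
            simp only [gradJ, Pi.sub_apply]
            ring
    rw [hJ, ← hkey]
    exact ((ContinuousLinearMap.proj i : (Fin I → ℝ) →L[ℝ] ℝ).hasFDerivAt).sub hmain
  refine ⟨hgrad, fun d hmax => ?_⟩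
  have hloc : IsLocalMax (Jobj I D i) d := Filter.Eventually.of_forall hmax
  have h0 := hloc.hasFDerivAt_eq_zero (hgrad d)
  funext m
  have hm := congrArg (fun L : (Fin I → ℝ) →L[ℝ] ℝ => L (Pi.single m 1)) h0
  simpa [JGrad.dotCLM_apply, Pi.single_apply] using hm


end
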